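/- Let p_1, ..., p_{k-1} be distinct primes and l_1, ..., l_{k-1} positive integers. For nonnegative integers n_0, n_1, ..., n_{k-1}, the equation (l_1·√p_1 + ... + l_{k-1}·√p_{k-1})·n_0 = n_1·√p_1 + ... + n_{k-1}·√p_{k-1} holds if and only if n_i = l_i·n_0 for all 1 ≤ i ≤ k-1. -/

import Mathlib

open Real

/-- Adjoin a square root to a subfield of ℝ. -/
noncomputable def adjSqrt (F : Subfield ℝ) (r : ℝ) (hr2 : r ^ 2 ∈ F) (hr : r ∉ F) : Subfield ℝ where
  carrier := {x | ∃ a ∈ F, ∃ b ∈ F, x = a + b * r}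
  zero_mem' := ⟨0, F.zero_mem, 0, F.zero_mem, by ring⟩
  one_mem' := ⟨1, F.one_mem, 0, F.zero_mem, by ring⟩
  add_mem' := by
    rintro x y ⟨a, ha, b, hb, rfl⟩ ⟨c, hc, d, hd, rfl⟩
    exact ⟨a + c, F.add_mem ha hc, b + d, F.add_mem hb hd, by ring⟩
  mul_mem' := by
    rintro x y ⟨a, ha, b, hb, rfl⟩ ⟨c, hc, d, hd, rfl⟩
    exact ⟨a * c + b * d * r ^ 2, by
        exact F.add_mem (F.mul_mem ha hc) (F.mul_mem (F.mul_mem hb hd) hr2),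
      a * d + b * c, F.add_mem (F.mul_mem ha hd) (F.mul_mem hb hc), by ring⟩
  neg_mem' := by
    rintro x ⟨a, ha, b, hb, rfl⟩
    exact ⟨-a, F.neg_mem ha, -b, F.neg_mem hb, by ring⟩
  inv_mem' := by
    rintro x ⟨a, ha, b, hb, rfl⟩
    by_cases hx : a + b * r = 0
    · exact ⟨0, F.zero_mem, 0, F.zero_mem, by rw [hx]; simp⟩
    have hD : a ^ 2 - b ^ 2 * r ^ 2 ≠ 0 := by
      intro hD
      by_cases hb0 : b = 0
      · subst hb0
        have ha0 : a = 0 := by nlinarith [sq_nonneg a]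
        exact hx (by rw [ha0]; ring)
      · have : r ^ 2 = (a / b) ^ 2 := by field_simp at hD ⊢; nlinarith [hD]
        have := sq_eq_sq_iff_eq_or_eq_neg.mp this.symm
        rcases this with h | h
        · exact hr (h ▸ F.div_mem ha hb)
        · have : r = -(a / b) := by linarith [h]
          exact hr (this ▸ F.neg_mem (F.div_mem ha hb))
    refine ⟨a / (a ^ 2 - b ^ 2 * r ^ 2), F.div_mem ha (F.sub_mem (F.pow_mem ha 2) (F.mul_mem (F.pow_mem hb 2) hr2)),
      -b / (a ^ 2 - b ^ 2 * r ^ 2), F.div_mem (F.neg_mem hb) (F.sub_mem (F.pow_mem ha 2) (F.mul_mem (F.pow_mem hb 2) hr2)), ?_⟩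
    have : (a / (a ^ 2 - b ^ 2 * r ^ 2) + -b / (a ^ 2 - b ^ 2 * r ^ 2) * r) * (a + b * r) = 1 := by
      field_simp
      ring
    exact (eq_inv_of_mul_eq_one_left this).symm

theorem sqrt_mem_aux : ∀ (L : List ℕ), (∀ q ∈ L, q.Prime) → L.Nodup →
    ∃ F : Subfield ℝ, (∀ q ∈ L, Real.sqrt q ∈ F) ∧
      ∀ m : ℕ, Squarefree m → 2 ≤ m → (∀ q ∈ L, ¬ q ∣ m) → Real.sqrt m ∉ F := by
  intro L
  induction L with
  | nil =>
    intro _ _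
    refine ⟨(Rat.castHom ℝ).fieldRange, by simp, ?_⟩
    intro m hm h2 _ hmem
    have hirr : Irrational (√(m : ℕ)) := by
      rw [irrational_sqrt_natCast_iff]
      rintro ⟨t, rfl⟩
      have ht : t = 1 := Nat.isUnit_iff.mp (hm t dvd_rfl)
      subst ht
      omega
    obtain ⟨q, hq⟩ := RingHom.mem_fieldRange.mp hmem
    exact hirr ⟨q, hq⟩
  | cons q L ih =>
    intro hpr hnd
    obtain ⟨F, hmemF, hnot⟩ := ih (fun p hp => hpr p (List.mem_cons_of_mem _ hp)) hnd.of_cons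
    have hqpr : q.Prime := hpr q List.mem_cons_self
    have hqL : q ∉ L := (List.nodup_cons.mp hnd).1
    have hnotq : ∀ p ∈ L, p ≠ q := fun p hp he => hqL (he ▸ hp)
    have hq : Real.sqrt q ∉ F := by
      refine hnot q hqpr.squarefree hqpr.two_le ?_
      intro p hp hdvd
      exact hnotq p hp ((Nat.prime_dvd_prime_iff_eq (hpr p (List.mem_cons_of_mem _ hp)) hqpr).mp hdvd)
    have hq2 : (Real.sqrt q) ^ 2 ∈ F := by
      rw [Real.sq_sqrt (by positivity)]
      exact natCast_mem F q
    refine ⟨adjSqrt F _ hq2 hq, ?_, ?_⟩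
    · intro p hp
      rcases List.mem_cons.mp hp with rfl | hp
      · exact ⟨0, F.zero_mem, 1, F.one_mem, by ring⟩
      · exact ⟨Real.sqrt p, hmemF p hp, 0, F.zero_mem, by ring⟩
    · rintro m hm h2 hdvd ⟨a, ha, b, hb, hab⟩
      have hmq : ¬ (q : ℕ) ∣ m := hdvd q List.mem_cons_self
      have hdvdL : ∀ p ∈ L, ¬ p ∣ m := fun p hp => hdvd p (List.mem_cons_of_mem _ hp)
      have hsq : (m : ℝ) = a ^ 2 + b ^ 2 * q + 2 * a * b * Real.sqrt q := by
        have h1 : (Real.sqrt m) ^ 2 = (a + b * Real.sqrt q) ^ 2 := by rw [hab]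
        rw [Real.sq_sqrt (by positivity)] at h1
        rw [h1]
        have : (Real.sqrt q) ^ 2 = (q : ℝ) := Real.sq_sqrt (by positivity)
        nlinarith [this]
      by_cases hb0 : b = 0
      · exact hnot m hm h2 hdvdL (by rw [hab, hb0]; simpa using ha)
      by_cases ha0 : a = 0
      · -- √(m q) = b * q ∈ F
        have hbq : Real.sqrt m = b * Real.sqrt q := by rw [hab, ha0]; ring
        have : Real.sqrt ((m * q : ℕ) : ℝ) = b * q := by
          push_cast
          rw [Real.sqrt_mul (by positivity), hbq, mul_assoc,
            Real.mul_self_sqrt (by positivity)]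
        refine hnot (m * q) ?_ ?_ ?_ (by rw [this]; exact F.mul_mem hb (natCast_mem F q))
        · rw [Nat.squarefree_mul_iff]
          exact ⟨(Nat.coprime_comm.mp (hqpr.coprime_iff_not_dvd.mpr hmq)), hm, hqpr.squarefree⟩
        · nlinarith [hqpr.two_le]
        · intro p hp hpd
          rcases (Nat.Prime.dvd_mul (hpr p (List.mem_cons_of_mem _ hp))).mp hpd with h | h
          · exact hdvdL p hp h
          · exact hnotq p hp ((Nat.prime_dvd_prime_iff_eq (hpr p (List.mem_cons_of_mem _ hp)) hqpr).mp h)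
      · -- √q ∈ F
        have h2ab : (2 * a * b) ≠ 0 := by positivity
        have : Real.sqrt q = ((m : ℝ) - a ^ 2 - b ^ 2 * q) / (2 * a * b) := by
          field_simp
          linarith [hsq]
        refine hq (this ▸ F.div_mem (F.sub_mem (F.sub_mem (natCast_mem F m) (F.pow_mem ha 2)) (F.mul_mem (F.pow_mem hb 2) (natCast_mem F q))) (F.mul_mem (F.mul_mem (natCast_mem F 2) ha) hb))

theorem sqrt_primes_indep {k : ℕ} (p : Fin k → ℕ) (hp : ∀ i, (p i).Prime)
    (hinj : Function.Injective p) (c : Fin k → ℤ)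
    (h : ∑ i, (c i : ℝ) * Real.sqrt (p i) = 0) : ∀ i, c i = 0 := by
  by_contra hc
  push_neg at hc
  obtain ⟨j, hj⟩ := hc
  set L : List ℕ := (Finset.univ.erase j).toList.map p with hL
  have hLpr : ∀ q ∈ L, q.Prime := by
    intro q hq
    obtain ⟨i, _, rfl⟩ := List.mem_map.mp hq
    exact hp i
  have hLnd : L.Nodup := (Finset.nodup_toList _).map hinj
  obtain ⟨F, hmemF, hnot⟩ := sqrt_mem_aux L hLpr hLnd
  have hsum : (c j : ℝ) * Real.sqrt (p j) = -∑ i ∈ Finset.univ.erase j, (c i : ℝ) * Real.sqrt (p i) := by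
    rw [← Finset.add_sum_erase _ _ (Finset.mem_univ j)] at h
    linarith [h]
  have hjF : Real.sqrt (p j) ∈ F := by
    have hcj : ((c j : ℝ)) ≠ 0 := Int.cast_ne_zero.mpr hj
    have : Real.sqrt (p j) = (-∑ i ∈ Finset.univ.erase j, (c i : ℝ) * Real.sqrt (p i)) / (c j) := by
      rw [← hsum]; field_simp
    rw [this]
    refine F.div_mem (F.neg_mem (sum_mem ?_)) (intCast_mem F (c j))
    intro i hi
    refine F.mul_mem (intCast_mem F (c i)) (hmemF _ ?_)
    exact List.mem_map.mpr ⟨i, by simpa [hL] using hi, rfl⟩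
  refine hnot (p j) (hp j).squarefree (hp j).two_le ?_ hjF
  intro q hq hdvd
  obtain ⟨i, hi, rfl⟩ := List.mem_map.mp hq
  have : p i = p j := (Nat.prime_dvd_prime_iff_eq (hp i) (hp j)).mp hdvd
  have : i = j := hinj this
  simp [hL, this] at hi

theorem counter_zero_iff_in_Lgen
    (k : ℕ) (p : Fin k → ℕ) (hp : ∀ i, (p i).Prime)
    (hinj : Function.Injective p)
    (l : Fin k → ℕ) (hl : ∀ i, 0 < l i)
    (n₀ : ℕ) (n : Fin k → ℕ) :
    (∑ i, (l i : ℝ) * Real.sqrt (p i)) * n₀ = ∑ i, (n i : ℝ) * Real.sqrt (p i)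
      ↔ ∀ i, n i = l i * n₀ := by
  constructor
  · intro h
    have h0 : ∑ i, (((l i * n₀ : ℤ) - n i : ℤ) : ℝ) * Real.sqrt (p i) = 0 := by
      rw [Finset.sum_mul] at h
      rw [← sub_eq_zero] at h
      rw [← h, ← Finset.sum_sub_distrib]
      apply Finset.sum_congr rfl
      intro i _
      push_cast
      ring
    have := sqrt_primes_indep p hp hinj _ h0
    intro i
    have := this i
    omega
  · intro h
    rw [Finset.sum_mul]
    apply Finset.sum_congr rfl
    intro i _
    rw [h i]
    push_cast
    ring
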